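/- If G(T) is a dense subsemigroup of a Hausdorff CLP-compact topological semigroup S, then S = G(T) and the topology of S is τ_c; in particular S is compact. Conversely, G(T) endowed with τ_c is a compact Hausdorff topological semigroup (so G(T) embeds densely into a CLP-compact topological semigroup if and only if G(T) is compact in τ_c). -/

import Mathlib

/-! Preamble: graph inverse semigroups and compactness-type properties. -/

namespace GISPaper

variable {V E : Type*}

/-- `IsPathFrom src rng v l` means that the list of edges `l` is composable
and starts at the vertex `v`. -/
def IsPathFrom (src rng : E → V) : V → List E → Prop
  | _, [] => True
  | v, e :: l => src e = v ∧ IsPathFrom src rng (rng e) l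

/-- The end vertex of a list of edges starting at the vertex `v`. -/
def pathEnd (rng : E → V) : V → List E → V
  | v, [] => v
  | _, e :: l => pathEnd rng (rng e) l

theorem pathEnd_append (rng : E → V) (v : V) (l₁ l₂ : List E) :
    pathEnd rng v (l₁ ++ l₂) = pathEnd rng (pathEnd rng v l₁) l₂ := by
  induction l₁ generalizing v with
  | nil => rfl
  | cons e l ih => simpa [pathEnd] using ih (rng e)

theorem isPathFrom_append (src rng : E → V) (v : V) (l₁ l₂ : List E) :
    IsPathFrom src rng v (l₁ ++ l₂) ↔
      IsPathFrom src rng v l₁ ∧ IsPathFrom src rng (pathEnd rng v l₁) l₂ := by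
  induction l₁ generalizing v with
  | nil => simp [IsPathFrom, pathEnd]
  | cons e l ih => simp [IsPathFrom, pathEnd, ih (rng e), and_assoc]

/-- A (directed) path in the graph `(V, E, src, rng)`: a starting vertex together
with a composable list of edges (a path of length zero is just a vertex). -/
structure GPath (src rng : E → V) where
  start : V
  edges : List E
  isPath : IsPathFrom src rng start edges

/-- The range (end vertex) of a path. -/
def GPath.range {src rng : E → V} (p : GPath src rng) : V :=
  pathEnd rng p.start p.edges

/-- The nonzero elements of the graph inverse semigroup: pairs `u v⁻¹` of paths
with `r u = r v`. -/
def GISElem (src rng : E → V) : Type _ :=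
  {p : GPath src rng × GPath src rng // p.1.range = p.2.range}

/-- The graph inverse semigroup over the graph `(V, E, src, rng)`: the nonzero
elements `u v⁻¹` together with a zero element (represented by `none`). -/
def GIS (src rng : E → V) : Type _ := Option (GISElem src rng)

instance {src rng : E → V} : Zero (GIS src rng) :=
  ⟨(none : Option (GISElem src rng))⟩

open Classical in
/-- The multiplication of a graph inverse semigroup:
`u₁v₁⁻¹ · u₂v₂⁻¹ = u₁w v₂⁻¹` if `u₂ = v₁ w`, `u₁v₁⁻¹ · u₂v₂⁻¹ = u₁ (v₂ w)⁻¹` if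
`v₁ = u₂ w`, and `0` otherwise; `0` is absorbing. -/
noncomputable def GIS.mul {src rng : E → V} :
    Option (GISElem src rng) → Option (GISElem src rng) → Option (GISElem src rng)
  | some ⟨(u₁, v₁), h₁⟩, some ⟨(u₂, v₂), h₂⟩ =>
    if h : v₁.start = u₂.start ∧ v₁.edges <+: u₂.edges then
      some ⟨(⟨u₁.start, u₁.edges ++ u₂.edges.drop v₁.edges.length, by
        obtain ⟨hs, t, ht⟩ := h
        have hdrop : u₂.edges.drop v₁.edges.length = t := by
          rw [← ht, List.drop_left]
        have hu₂ := u₂.isPath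
        rw [← ht, isPathFrom_append] at hu₂
        rw [hdrop, isPathFrom_append]
        refine ⟨u₁.isPath, ?_⟩
        have he : pathEnd rng u₁.start u₁.edges = pathEnd rng u₂.start v₁.edges := by
          rw [← hs]; exact h₁
        rw [he]; exact hu₂.2⟩, v₂), by
        show pathEnd rng u₁.start (u₁.edges ++ u₂.edges.drop v₁.edges.length) = v₂.range
        obtain ⟨hs, t, ht⟩ := h
        have hdrop : u₂.edges.drop v₁.edges.length = t := by
          rw [← ht, List.drop_left]
        rw [hdrop, pathEnd_append]
        have he : pathEnd rng u₁.start u₁.edges = pathEnd rng u₂.start v₁.edges := by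
          rw [← hs]; exact h₁
        rw [he, ← pathEnd_append, ht]
        exact h₂⟩
    else if h' : u₂.start = v₁.start ∧ u₂.edges <+: v₁.edges then
      some ⟨(u₁, ⟨v₂.start, v₂.edges ++ v₁.edges.drop u₂.edges.length, by
        obtain ⟨hs, t, ht⟩ := h'
        have hdrop : v₁.edges.drop u₂.edges.length = t := by
          rw [← ht, List.drop_left]
        have hv₁ := v₁.isPath
        rw [← ht, isPathFrom_append] at hv₁
        rw [hdrop, isPathFrom_append]
        refine ⟨v₂.isPath, ?_⟩
        have he : pathEnd rng v₂.start v₂.edges = pathEnd rng v₁.start u₂.edges := by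
          rw [← hs]; exact h₂.symm
        rw [he]; exact hv₁.2⟩), by
        show u₁.range = pathEnd rng v₂.start (v₂.edges ++ v₁.edges.drop u₂.edges.length)
        obtain ⟨hs, t, ht⟩ := h'
        have hdrop : v₁.edges.drop u₂.edges.length = t := by
          rw [← ht, List.drop_left]
        have he : pathEnd rng v₂.start v₂.edges = pathEnd rng v₁.start u₂.edges := by
          rw [← hs]; exact h₂.symm
        rw [hdrop, pathEnd_append, he, ← pathEnd_append, ht]
        exact h₁⟩
    else none
  | _, _ => none

noncomputable instance {src rng : E → V} : Mul (GIS src rng) := ⟨GIS.mul⟩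

theorem GIS.zero_mul {src rng : E → V} (x : GIS src rng) : 0 * x = 0 := rfl

/-- The topology in which every nonzero point is isolated and the open
neighbourhoods of `0` are exactly the cofinite sets containing `0`. -/
def tauC (α : Type*) [Zero α] : TopologicalSpace α where
  IsOpen U := (0 : α) ∈ U → Uᶜ.Finite
  isOpen_univ := by simp
  isOpen_inter U W hU hW h := by
    rw [Set.compl_inter]
    exact (hU h.1).union (hW h.2)
  isOpen_sUnion 𝒮 h h0 := by
    obtain ⟨U, hU, hU0⟩ := h0
    exact (h U hU hU0).subset (Set.compl_subset_compl.mpr (Set.subset_sUnion_of_mem hU))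

/-- A topological space is CLP-compact if every cover by clopen sets has a
finite subcover. -/
def CLPCompact (X : Type*) [TopologicalSpace X] : Prop :=
  ∀ 𝒰 : Set (Set X), (∀ U ∈ 𝒰, IsClopen U) → ⋃₀ 𝒰 = Set.univ →
    ∃ ℱ ⊆ 𝒰, ℱ.Finite ∧ ⋃₀ ℱ = Set.univ

/-- A topological space is countably compact if every infinite subset has an
accumulation point. -/
def CountablyCompactSpace (X : Type*) [TopologicalSpace X] : Prop :=
  ∀ B : Set X, B.Infinite → ∃ x : X, AccPt x (Filter.principal B)

/-- A topological space is feebly compact if every locally finite family of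
nonempty open sets is finite. -/
def FeeblyCompact (X : Type*) [TopologicalSpace X] : Prop :=
  ∀ 𝒰 : Set (Set X), (∀ U ∈ 𝒰, IsOpen U ∧ U.Nonempty) →
    (∀ x : X, ∃ N ∈ nhds x, {U ∈ 𝒰 | (U ∩ N).Nonempty}.Finite) → 𝒰.Finite

/-- The multiplication of the bicyclic monoid on `ℕ × ℕ`. -/
def bicyclicMul (x y : ℕ × ℕ) : ℕ × ℕ :=
  (x.1 + y.1 - min x.2 y.1, x.2 + y.2 - min x.2 y.1)

/-- The multiplication of the semigroup of `X × X`-matrix units (with zero `none`). -/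
def matUnitsMul {X : Type*} [DecidableEq X] :
    Option (X × X) → Option (X × X) → Option (X × X)
  | some (a, b), some (c, d) => if b = c then some (a, d) else none
  | _, _ => none

/-- A cycle based at the vertex `e`: a path of nonzero length from `e` to `e`. -/
def HasCycleAt (src rng : E → V) (e : V) : Prop :=
  ∃ p : GPath src rng, p.edges ≠ [] ∧ p.start = e ∧ p.range = e

end GISPaper

namespace GISPaper

/-- The nonzero elements of the graph inverse semigroup `G(T)` over the unary tree `T`:
the triple `(n, k, m)` with `n ≤ m` and `k ≤ m` represents the element `(n,m)(k,m)⁻¹`,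
where `(i,j)` is the unique path of `T` from `i` to `j`. -/
def GTElem : Type := {t : ℕ × ℕ × ℕ // t.1 ≤ t.2.2 ∧ t.2.1 ≤ t.2.2}

/-- The graph inverse semigroup over the unary tree (zero is `none`). -/
def GT : Type := Option GTElem

instance : Zero GT := ⟨(none : Option GTElem)⟩

/-- Multiplication of `G(T)`: `(n,k,m)·(n',k',m') = (n,k',max m m')` if `k = n'`,
and `0` otherwise; `0` is absorbing. -/
def GT.mul : Option GTElem → Option GTElem → Option GTElem
  | some ⟨(n, k, m), h⟩, some ⟨(n', k', m'), h'⟩ =>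
    if k = n' then
      some ⟨(n, k', max m m'),
        ⟨le_trans h.1 (le_max_left m m'), le_trans h'.2 (le_max_right m m')⟩⟩
    else none
  | _, _ => none

instance : Mul GT := ⟨GT.mul⟩

/-- `L_n^* = {(n,n,m) : m ≥ n}`, the maximal chain of nonzero idempotents at `n`. -/
def Lstar (n : ℕ) : Set GT :=
  {x | ∃ p : GTElem, x = some p ∧ p.1.1 = n ∧ p.1.2.1 = n}

/-- `L_n = L_n^* ∪ {0}`. -/
def L (n : ℕ) : Set GT := insert 0 (Lstar n)

end GISPaper
namespace GISPaper

/-! ### Auxiliary algebra lemmas for `GT` -/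

/-- Coercion of a nonzero element into `GT`. -/
def el (p : GTElem) : GT := some p

theorem gt_zero_mul (x : GT) : (0 : GT) * x = 0 := rfl

theorem gt_mul_zero (x : GT) : x * (0 : GT) = 0 := by
  cases x <;> rfl

theorem el_mul_el (a b c a' b' c' : ℕ) (h1 : a ≤ c) (h2 : b ≤ c)
    (h1' : a' ≤ c') (h2' : b' ≤ c') :
    el ⟨(a, b, c), ⟨h1, h2⟩⟩ * el ⟨(a', b', c'), ⟨h1', h2'⟩⟩ =
      if b = a' then
        el ⟨(a, b', max c c'),
          ⟨le_trans h1 (le_max_left c c'), le_trans h2' (le_max_right c c')⟩⟩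
      else (0 : GT) := rfl

theorem el_ne_zero (p : GTElem) : el p ≠ 0 :=
  fun h => Option.some_ne_none p h

theorem el_inj {p q : GTElem} (h : el p = el q) : p = q :=
  Option.some.inj h

theorem gtElem_ext {p q : GTElem} (h : p.1 = q.1) : p = q := Subtype.ext h

theorem gt_cases (x : GT) : x = 0 ∨ ∃ p : GTElem, x = el p := by
  cases x with
  | none => exact Or.inl rfl
  | some p => exact Or.inr ⟨p, rfl⟩

/-- Elements with bounded third coordinate form a finite set. -/
theorem fin_third (M : ℕ) :
    {x : GT | ∃ p : GTElem, x = el p ∧ p.1.2.2 ≤ M}.Finite := by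
  have h1 : (Set.Iic M ×ˢ (Set.Iic M ×ˢ Set.Iic M) : Set (ℕ × ℕ × ℕ)).Finite :=
    (Set.finite_Iic M).prod ((Set.finite_Iic M).prod (Set.finite_Iic M))
  have h2 : {p : GTElem | p.1.2.2 ≤ M}.Finite := by
    have h3 : {p : GTElem | p.1.2.2 ≤ M} ⊆
        Subtype.val ⁻¹' (Set.Iic M ×ˢ (Set.Iic M ×ˢ Set.Iic M)) := by
      rintro ⟨⟨a, b, c⟩, ⟨ha, hb⟩⟩ hp
      change c ≤ M at hp
      exact ⟨le_trans ha hp, le_trans hb hp, hp⟩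
    exact (h1.preimage Subtype.val_injective.injOn).subset h3
  have h4 := h2.image el
  apply h4.subset
  rintro x ⟨p, rfl, hp⟩
  exact ⟨p, hp, rfl⟩

/-- Left translations are finite-to-one onto nonzero elements. -/
theorem finL (c : GTElem) : {z : GT | ∃ w : GT, z * w = el c}.Finite := by
  apply (fin_third c.1.2.2).subset
  rintro z ⟨w, hw⟩
  cases z with
  | none => exact absurd hw (fun h => Option.some_ne_none _ h.symm)
  | some p =>
    cases w with
    | none => exact absurd hw (fun h => Option.some_ne_none _ h.symm)
    | some q =>
      obtain ⟨⟨a, b, m⟩, ⟨ha, hb⟩⟩ := p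
      obtain ⟨⟨a', b', m'⟩, ⟨ha', hb'⟩⟩ := q
      rw [show (some ⟨(a,b,m), ⟨ha, hb⟩⟩ : GT) = el ⟨(a,b,m), ⟨ha, hb⟩⟩ from rfl,
        show (some ⟨(a',b',m'), ⟨ha', hb'⟩⟩ : GT) = el ⟨(a',b',m'), ⟨ha', hb'⟩⟩ from rfl,
        el_mul_el] at hw
      refine ⟨_, rfl, ?_⟩
      split_ifs at hw with hcond
      · have h3 : max m m' = c.1.2.2 := by
          have := congrArg (fun t : GTElem => t.1.2.2) (el_inj hw)
          simpa using this
        show m ≤ c.1.2.2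
        omega
      · exact absurd hw (fun h => Option.some_ne_none _ h.symm)
      · exact ha
      · exact hb
      · exact ha'
      · exact hb'

/-- Right translations are finite-to-one onto nonzero elements. -/
theorem finR (c : GTElem) : {z : GT | ∃ w : GT, w * z = el c}.Finite := by
  apply (fin_third c.1.2.2).subset
  rintro z ⟨w, hw⟩
  cases z with
  | none =>
    exfalso
    cases w with
    | none => exact Option.some_ne_none _ hw.symm
    | some q => exact Option.some_ne_none _ hw.symm
  | some p =>
    cases w with
    | none => exact absurd hw (fun h => Option.some_ne_none _ h.symm)
    | some q =>
      obtain ⟨⟨a, b, m⟩, ⟨ha, hb⟩⟩ := p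
      obtain ⟨⟨a', b', m'⟩, ⟨ha', hb'⟩⟩ := q
      rw [show (some ⟨(a,b,m), ⟨ha, hb⟩⟩ : GT) = el ⟨(a,b,m), ⟨ha, hb⟩⟩ from rfl,
        show (some ⟨(a',b',m'), ⟨ha', hb'⟩⟩ : GT) = el ⟨(a',b',m'), ⟨ha', hb'⟩⟩ from rfl,
        el_mul_el] at hw
      refine ⟨_, rfl, ?_⟩
      split_ifs at hw with hcond
      · have h3 : max m' m = c.1.2.2 := by
          have := congrArg (fun t : GTElem => t.1.2.2) (el_inj hw)
          simpa using this
        show m ≤ c.1.2.2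
        omega
      · exact absurd hw (fun h => Option.some_ne_none _ h.symm)
      · exact ha'
      · exact hb'
      · exact ha
      · exact hb

/-! ### The topology `tauC` -/

theorem tauC_isOpen_iff {α : Type*} [Zero α] (U : Set α) :
    @IsOpen α (tauC α) U ↔ ((0 : α) ∈ U → Uᶜ.Finite) := Iff.rfl

theorem tauC_isOpen_singleton {α : Type*} [Zero α] {x : α} (hx : x ≠ 0) :
    @IsOpen α (tauC α) {x} := by
  rw [tauC_isOpen_iff]
  intro h0
  exact absurd (Set.mem_singleton_iff.1 h0).symm hx

theorem tauC_compact : @CompactSpace GT (tauC GT) := by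
  letI : TopologicalSpace GT := tauC GT
  refine ⟨isCompact_of_finite_subcover fun {ιt} U hUo hcov => ?_⟩
  obtain ⟨i0, hi0⟩ : ∃ i, (0 : GT) ∈ U i := by
    have := hcov (Set.mem_univ (0 : GT)); simpa using this
  have hfin : ((U i0)ᶜ).Finite := hUo i0 hi0
  have hchoice : ∀ x : GT, ∃ i, x ∈ U i := by
    intro x
    have := hcov (Set.mem_univ x); simpa using this
  classical
  refine ⟨insert i0 (hfin.toFinset.image (fun x => (hchoice x).choose)), fun x _ => ?_⟩
  by_cases hx : x ∈ U i0
  · exact Set.mem_iUnion₂.2 ⟨i0, Finset.mem_insert_self _ _, hx⟩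
  · refine Set.mem_iUnion₂.2 ⟨(hchoice x).choose, ?_, (hchoice x).choose_spec⟩
    refine Finset.mem_insert_of_mem (Finset.mem_image.2 ?_)
    exact ⟨x, hfin.mem_toFinset.2 hx, rfl⟩

theorem tauC_t2 : @T2Space GT (tauC GT) := by
  letI : TopologicalSpace GT := tauC GT
  refine ⟨fun x y hxy => ?_⟩
  rcases eq_or_ne x 0 with rfl | hx0
  · refine ⟨{y}ᶜ, {y}, ?_, tauC_isOpen_singleton (Ne.symm hxy), ?_, rfl, ?_⟩
    · intro _; simpa using Set.finite_singleton y
    · simpa using hxy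
    · simp [Set.disjoint_iff]
  · rcases eq_or_ne y 0 with rfl | hy0
    · refine ⟨{x}, {x}ᶜ, tauC_isOpen_singleton hx0, ?_, rfl, ?_, ?_⟩
      · intro _; simpa using Set.finite_singleton x
      · simpa using (Ne.symm hxy)
      · simp [Set.disjoint_iff]
    · exact ⟨{x}, {y}, tauC_isOpen_singleton hx0, tauC_isOpen_singleton hy0, rfl, rfl,
        by simp [Set.disjoint_singleton, hxy]⟩

theorem tauC_mul_cont :
    @Continuous _ _ (@instTopologicalSpaceProd GT GT (tauC GT) (tauC GT)) (tauC GT)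
      (fun p : GT × GT => p.1 * p.2) := by
  letI : TopologicalSpace GT := tauC GT
  rw [continuous_def]
  intro W hW
  rw [isOpen_prod_iff]
  intro x y hxy
  simp only [Set.mem_preimage] at hxy
  rcases eq_or_ne x 0 with rfl | hx0
  · -- x = 0, product is 0
    have h0W : (0 : GT) ∈ W := by rwa [gt_zero_mul] at hxy
    have hWc : (Wᶜ).Finite := hW h0W
    refine ⟨{z : GT | ∀ w, z * w ∈ W}, Set.univ, ?_, isOpen_univ, ?_, trivial, ?_⟩
    · rw [tauC_isOpen_iff]
      intro _
      have hsub : {z : GT | ∀ w, z * w ∈ W}ᶜ ⊆ ⋃ c ∈ Wᶜ, {z : GT | ∃ w, z * w = c} := by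
        intro z hz
        simp only [Set.mem_compl_iff, Set.mem_setOf_eq, not_forall] at hz
        obtain ⟨w, hw⟩ := hz
        exact Set.mem_iUnion₂.2 ⟨z * w, hw, w, rfl⟩
      refine (Set.Finite.biUnion hWc fun c hc => ?_).subset hsub
      rcases gt_cases c with rfl | ⟨e, rfl⟩
      · exact absurd h0W hc
      · exact finL e
    · intro w
      rw [gt_zero_mul]; exact h0W
    · rintro ⟨z, w⟩ ⟨hz, -⟩
      exact hz w
  · rcases eq_or_ne y 0 with rfl | hy0
    · have h0W : (0 : GT) ∈ W := by rwa [gt_mul_zero] at hxy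
      have hWc : (Wᶜ).Finite := hW h0W
      refine ⟨Set.univ, {w : GT | ∀ z, z * w ∈ W}, isOpen_univ, ?_, trivial, ?_, ?_⟩
      · rw [tauC_isOpen_iff]
        intro _
        have hsub : {w : GT | ∀ z, z * w ∈ W}ᶜ ⊆ ⋃ c ∈ Wᶜ, {w : GT | ∃ z, z * w = c} := by
          intro w hw
          simp only [Set.mem_compl_iff, Set.mem_setOf_eq, not_forall] at hw
          obtain ⟨z, hz⟩ := hw
          exact Set.mem_iUnion₂.2 ⟨z * w, hz, z, rfl⟩
        refine (Set.Finite.biUnion hWc fun c hc => ?_).subset hsub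
        rcases gt_cases c with rfl | ⟨e, rfl⟩
        · exact absurd h0W hc
        · exact finR e
      · intro z
        rw [gt_mul_zero]; exact h0W
      · rintro ⟨z, w⟩ ⟨-, hw⟩
        exact hw z
    · exact ⟨{x}, {y}, tauC_isOpen_singleton hx0, tauC_isOpen_singleton hy0, rfl, rfl,
        by rintro ⟨z, w⟩ ⟨rfl, rfl⟩; exact hxy⟩

end GISPaper
namespace GISPaper

section Part1

variable {S : Type*} [TopologicalSpace S] [T2Space S]

/-- Diagonal idempotent `(q,q,q)`. -/
def dia (q : ℕ) : GT := el ⟨(q, q, q), ⟨le_refl q, le_refl q⟩⟩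

theorem el_congr {p q : GTElem} (h : p.1 = q.1) : el p = el q :=
  congrArg el (gtElem_ext h)

theorem triple_eq {a b c a' b' c' : ℕ} (h1 : a = a') (h2 : b = b') (h3 : c = c') :
    ((a, b, c) : ℕ × ℕ × ℕ) = (a', b', c') := by subst h1; subst h2; subst h3; rfl

theorem el_mul_el' (p q : GTElem) :
    el p * el q =
      if p.1.2.1 = q.1.1 then
        el ⟨(p.1.1, q.1.2.1, max p.1.2.2 q.1.2.2),
          ⟨le_trans p.2.1 (le_max_left _ _), le_trans q.2.2 (le_max_right _ _)⟩⟩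
      else (0 : GT) := by
  obtain ⟨⟨a, b, c⟩, h1, h2⟩ := p
  obtain ⟨⟨a', b', c'⟩, h1', h2'⟩ := q
  rfl

theorem el_mul_pos (a b c b' c' : ℕ) (hA : a ≤ c := by omega) (hB : b ≤ c := by omega)
    (hA' : b ≤ c' := by omega) (hB' : b' ≤ c' := by omega) :
    el ⟨(a, b, c), ⟨hA, hB⟩⟩ * el ⟨(b, b', c'), ⟨hA', hB'⟩⟩ =
      el ⟨(a, b', max c c'),
        ⟨le_trans hA (le_max_left c c'), le_trans hB' (le_max_right c c')⟩⟩ := by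
  exact (el_mul_el' _ _).trans (if_pos rfl)

theorem el_third (a b c c' : ℕ) (hA : a ≤ c := by omega) (hB : b ≤ c := by omega)
    (hA' : a ≤ c' := by omega) (hB' : b ≤ c' := by omega) (h : c = c' := by omega) :
    el ⟨(a, b, c), ⟨hA, hB⟩⟩ = el ⟨(a, b, c'), ⟨hA', hB'⟩⟩ :=
  el_congr (triple_eq rfl rfl h)

theorem mem_of_eq {α : Type*} {x y : α} {U : Set α} (hxy : x = y) (h : x ∈ U) : y ∈ U :=
  hxy ▸ h

theorem dia_mul_self (q : ℕ) : dia q * dia q = dia q := by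
  rw [dia, el_mul_pos q q q q q, el_third q q (max q q) q]

theorem dia_mul_ne {q q' : ℕ} (h : q ≠ q') : dia q * dia q' = 0 := by
  rw [dia, dia]; exact (el_mul_el' _ _).trans (if_neg (fun hc => h hc))

theorem dia_inj {q q' : ℕ} (h : dia q = dia q') : q = q' := by
  have := congrArg (fun t : GTElem => t.1.1) (el_inj h)
  simpa using this

theorem el_mul_dia (p : GTElem) : el p * dia p.1.2.1 = el p := by
  obtain ⟨⟨a, b, c⟩, hA, hB⟩ := p
  have hA' : a ≤ c := hA
  have hB' : b ≤ c := hB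
  show el ⟨(a, b, c), ⟨hA, hB⟩⟩ * dia b = el ⟨(a, b, c), ⟨hA, hB⟩⟩
  have h0 : el ⟨(a, b, c), ⟨hA, hB⟩⟩ = el ⟨(a, b, c), ⟨hA', hB'⟩⟩ := rfl
  rw [h0, dia, el_mul_pos a b c b b, el_third a b (max c b) c]

theorem dia_mul_el (p : GTElem) : dia p.1.1 * el p = el p := by
  obtain ⟨⟨a, b, c⟩, hA, hB⟩ := p
  have hA' : a ≤ c := hA
  have hB' : b ≤ c := hB
  show dia a * el ⟨(a, b, c), ⟨hA, hB⟩⟩ = el ⟨(a, b, c), ⟨hA, hB⟩⟩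
  have h0 : el ⟨(a, b, c), ⟨hA, hB⟩⟩ = el ⟨(a, b, c), ⟨hA', hB'⟩⟩ := rfl
  rw [h0, dia, el_mul_pos a a a b c, el_third a b (max a c) c]

/-- Joint continuity, extracted at a point. -/
theorem open_pair {F : S × S → S} (hF : Continuous F) {x y : S} {W : Set S}
    (hW : IsOpen W) (hmem : F (x, y) ∈ W) :
    ∃ U V : Set S, IsOpen U ∧ IsOpen V ∧ x ∈ U ∧ y ∈ V ∧
      ∀ u ∈ U, ∀ v ∈ V, F (u, v) ∈ W := by
  have hpre : IsOpen (F ⁻¹' W) := hF.isOpen_preimage W hW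
  obtain ⟨U, V, hU, hV, hxU, hyV, hsub⟩ := isOpen_prod_iff.1 hpre x y hmem
  exact ⟨U, V, hU, hV, hxU, hyV, fun u hu v hv => hsub (Set.mk_mem_prod hu hv)⟩

variable {mulS : S → S → S} {ι : GT → S}

theorem contL (hcont : Continuous fun p : S × S => mulS p.1 p.2) (c : S) :
    Continuous (fun y : S => mulS c y) :=
  hcont.comp (continuous_const.prodMk continuous_id)

theorem contR (hcont : Continuous fun p : S × S => mulS p.1 p.2) (c : S) :
    Continuous (fun y : S => mulS y c) :=
  hcont.comp (continuous_id.prodMk continuous_const)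

theorem zeroR (hcont : Continuous fun p : S × S => mulS p.1 p.2)
    (hhom : ∀ x y : GT, ι (x * y) = mulS (ι x) (ι y)) (hdense : DenseRange ι)
    (s : S) : mulS s (ι 0) = ι 0 := by
  have h := hdense.equalizer (contR hcont (ι 0)) (continuous_const : Continuous fun _ : S => ι 0)
    (by funext x; show mulS (ι x) (ι 0) = ι 0; rw [← hhom, gt_mul_zero])
  exact congrFun h s

theorem zeroL (hcont : Continuous fun p : S × S => mulS p.1 p.2)
    (hhom : ∀ x y : GT, ι (x * y) = mulS (ι x) (ι y)) (hdense : DenseRange ι)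
    (s : S) : mulS (ι 0) s = ι 0 := by
  have h := hdense.equalizer (contL hcont (ι 0)) (continuous_const : Continuous fun _ : S => ι 0)
    (by funext x; show mulS (ι 0) (ι x) = ι 0; rw [← hhom, gt_zero_mul])
  exact congrFun h s

/-- Claim I: every nonzero element of the copy of `G(T)` is isolated in `S`. -/
theorem isolated (hcont : Continuous fun p : S × S => mulS p.1 p.2)
    (hinj : Function.Injective ι)
    (hhom : ∀ x y : GT, ι (x * y) = mulS (ι x) (ι y)) (hdense : DenseRange ι)
    (e : GTElem) : IsOpen ({ι (el e)} : Set S) := by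
  by_contra hniso
  obtain ⟨⟨n, k, m⟩, h1, h2⟩ := e
  have h1' : n ≤ m := h1
  have h2' : k ≤ m := h2
  -- Non-isolation gives other points in every neighbourhood.
  have hNI : ∀ U : Set S, IsOpen U → ι (el ⟨(n, k, m), ⟨h1', h2'⟩⟩) ∈ U →
      ∃ y ∈ U, y ≠ ι (el ⟨(n, k, m), ⟨h1', h2'⟩⟩) := by
    intro U hU hmem
    by_contra hcon
    push_neg at hcon
    apply hniso
    have hEq : U = {ι (el ⟨(n, k, m), ⟨h1', h2'⟩⟩)} :=
      Set.eq_singleton_iff_unique_mem.2 ⟨hmem, hcon⟩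
    rw [hEq] at hU
    exact hU
  -- Step CL: every neighbourhood of ι a contains deep elements of the chain C_{n,k}.
  have hCL : ∀ M, m ≤ M → ∀ U : Set S, IsOpen U → ι (el ⟨(n, k, m), ⟨h1', h2'⟩⟩) ∈ U →
      ∃ j, M < j ∧ ∃ hj : n ≤ j ∧ k ≤ j, ι (el ⟨(n, k, j), hj⟩) ∈ U := by
    intro M hM
    induction M, hM using Nat.le_induction with
    | base =>
      intro U hU hmem
      have h0a : ι (el ⟨(n, k, m), ⟨h1', h2'⟩⟩) ≠ ι 0 := fun h => el_ne_zero _ (hinj h)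
      have hU0 : IsOpen (U \ {ι 0}) := hU.sdiff isClosed_singleton
      have hmem0 : ι (el ⟨(n, k, m), ⟨h1', h2'⟩⟩) ∈ U \ {ι 0} := ⟨hmem, h0a⟩
      have hφc : Continuous (fun y : S =>
          mulS (mulS (ι (el ⟨(n, n, m), ⟨h1', h1'⟩⟩)) y) (ι (el ⟨(k, k, m), ⟨h2', h2'⟩⟩))) :=
        (contR hcont _).comp (contL hcont _)
      have hφa : mulS (mulS (ι (el ⟨(n, n, m), ⟨h1', h1'⟩⟩)) (ι (el ⟨(n, k, m), ⟨h1', h2'⟩⟩)))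
          (ι (el ⟨(k, k, m), ⟨h2', h2'⟩⟩)) = ι (el ⟨(n, k, m), ⟨h1', h2'⟩⟩) := by
        rw [← hhom, ← hhom, el_mul_pos n n m k m, el_mul_pos n k (max m m) k m,
          el_third n k (max (max m m) m) m]
      have hpre : IsOpen ((fun y : S =>
          mulS (mulS (ι (el ⟨(n, n, m), ⟨h1', h1'⟩⟩)) y) (ι (el ⟨(k, k, m), ⟨h2', h2'⟩⟩)))
            ⁻¹' (U \ {ι 0})) := hφc.isOpen_preimage _ hU0
      have hamem : ι (el ⟨(n, k, m), ⟨h1', h2'⟩⟩) ∈ (fun y : S =>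
          mulS (mulS (ι (el ⟨(n, n, m), ⟨h1', h1'⟩⟩)) y) (ι (el ⟨(k, k, m), ⟨h2', h2'⟩⟩)))
            ⁻¹' (U \ {ι 0}) := by
        simp only [Set.mem_preimage, hφa]
        exact hmem0
      have hJfin : (ι '' (insert 0
          {x : GT | ∃ p : GTElem, x = el p ∧ p.1.1 = n ∧ p.1.2.1 = k ∧ p.1.2.2 ≤ m})).Finite := by
        refine Set.Finite.image ι (Set.Finite.insert 0 ((fin_third m).subset ?_))
        rintro x ⟨p, rfl, -, -, hp⟩
        exact ⟨p, rfl, hp⟩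
      set Jset : Set S := ι '' (insert 0
        {x : GT | ∃ p : GTElem, x = el p ∧ p.1.1 = n ∧ p.1.2.1 = k ∧ p.1.2.2 ≤ m}) with hJdef
      set φpre : Set S := (fun y : S =>
          mulS (mulS (ι (el ⟨(n, n, m), ⟨h1', h1'⟩⟩)) y) (ι (el ⟨(k, k, m), ⟨h2', h2'⟩⟩)))
            ⁻¹' (U \ {ι 0}) with hφdef
      have hWopen : IsOpen (φpre \ (Jset \ {ι (el ⟨(n, k, m), ⟨h1', h2'⟩⟩)})) :=
        hpre.sdiff ((hJfin.subset Set.diff_subset).isClosed)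
      have hWa : ι (el ⟨(n, k, m), ⟨h1', h2'⟩⟩) ∈
          φpre \ (Jset \ {ι (el ⟨(n, k, m), ⟨h1', h2'⟩⟩)}) :=
        ⟨hamem, fun hc => hc.2 rfl⟩
      obtain ⟨y, hyW, hyne⟩ := hNI _ hWopen hWa
      have hW'open : IsOpen ((φpre \ (Jset \ {ι (el ⟨(n, k, m), ⟨h1', h2'⟩⟩)}))
          \ {ι (el ⟨(n, k, m), ⟨h1', h2'⟩⟩)}) := hWopen.sdiff isClosed_singleton
      obtain ⟨g, hg⟩ := hdense.exists_mem_open hW'open ⟨y, hyW, hyne⟩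
      have hgJ : ι g ∉ Jset := by
        intro hc
        exact hg.1.2 ⟨hc, hg.2⟩
      have hg0 : g ≠ 0 := by
        rintro rfl
        exact hgJ ⟨0, Set.mem_insert _ _, rfl⟩
      obtain ⟨p, rfl⟩ := (gt_cases g).resolve_left hg0
      obtain ⟨⟨p1, p2, p3⟩, hp1, hp2⟩ := p
      have hp1' : p1 ≤ p3 := hp1
      have hp2' : p2 ≤ p3 := hp2
      have hval : mulS (mulS (ι (el ⟨(n, n, m), ⟨h1', h1'⟩⟩))
          (ι (el ⟨(p1, p2, p3), ⟨hp1, hp2⟩⟩))) (ι (el ⟨(k, k, m), ⟨h2', h2'⟩⟩)) ∈ U \ {ι 0} :=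
        hg.1.1
      rw [← hhom, ← hhom] at hval
      by_cases hc1 : n = p1
      · obtain rfl : n = p1 := hc1
        by_cases hc2 : p2 = k
        · obtain rfl : k = p2 := hc2.symm
          have hp3 : ¬ p3 ≤ m := by
            intro hp3le
            exact hgJ ⟨el ⟨(n, k, p3), ⟨hp1, hp2⟩⟩,
              Set.mem_insert_of_mem _ ⟨_, rfl, rfl, rfl, hp3le⟩, rfl⟩
          have hstep : (el ⟨(n, n, m), ⟨h1', h1'⟩⟩ * el ⟨(n, k, p3), ⟨hp1, hp2⟩⟩)
              * el ⟨(k, k, m), ⟨h2', h2'⟩⟩ =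
              el ⟨(n, k, max (max m p3) m),
                ⟨(show n ≤ max (max m p3) m by omega), (show k ≤ max (max m p3) m by omega)⟩⟩ := by
            have e1 : el ⟨(n, n, m), ⟨h1', h1'⟩⟩ * el ⟨(n, k, p3), ⟨hp1, hp2⟩⟩ =
                el ⟨(n, k, max m p3),
                  ⟨le_trans h1' (le_max_left m p3), le_trans hp2' (le_max_right m p3)⟩⟩ := by
              have := el_mul_pos n n m k p3 h1' h1' hp1' hp2'
              exact this
            rw [e1]
            have := el_mul_pos n k (max m p3) k m
              (le_trans h1' (le_max_left m p3)) (le_trans hp2' (le_max_right m p3)) h2' h2'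
            exact this
          rw [hstep] at hval
          exact ⟨max (max m p3) m, by omega, ⟨by omega, by omega⟩, hval.1⟩
        · have hzin : el ⟨(n, n, m), ⟨h1', h1'⟩⟩ * el ⟨(n, p2, p3), ⟨hp1, hp2⟩⟩ =
              el ⟨(n, p2, max m p3),
                ⟨le_trans h1' (le_max_left m p3), le_trans hp2' (le_max_right m p3)⟩⟩ :=
            el_mul_pos n n m p2 p3 h1' h1' hp1' hp2'
          have hzout : el ⟨(n, p2, max m p3),
              ⟨le_trans h1' (le_max_left m p3), le_trans hp2' (le_max_right m p3)⟩⟩ *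
              el ⟨(k, k, m), ⟨h2', h2'⟩⟩ = 0 := by
            exact (el_mul_el' _ _).trans (if_neg (fun hcc => hc2 hcc))
          rw [hzin, hzout] at hval
          exact absurd rfl hval.2
      · have hz : el ⟨(n, n, m), ⟨h1', h1'⟩⟩ * el ⟨(p1, p2, p3), ⟨hp1, hp2⟩⟩ = 0 := by
          exact (el_mul_el' _ _).trans (if_neg (fun hcc => hc1 hcc))
        rw [hz, gt_zero_mul] at hval
        exact absurd rfl hval.2
    | succ M hmM ih =>
      intro U hU hmem
      have hnM : n ≤ M + 1 := by omega
      have hkM : k ≤ M + 1 := by omega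
      have hab : ι (el ⟨(n, k, m), ⟨h1', h2'⟩⟩) ≠ ι (el ⟨(n, k, M + 1), ⟨hnM, hkM⟩⟩) := by
        intro hEq
        have := congrArg (fun t : GTElem => t.1.2.2) (el_inj (hinj hEq))
        simp only [] at this
        omega
      have hU' : IsOpen (U \ {ι (el ⟨(n, k, M + 1), ⟨hnM, hkM⟩⟩)}) :=
        hU.sdiff isClosed_singleton
      obtain ⟨j, hjM, hj, hjmem⟩ := ih (U \ {ι (el ⟨(n, k, M + 1), ⟨hnM, hkM⟩⟩)}) hU'
        ⟨hmem, hab⟩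
      refine ⟨j, ?_, hj, hjmem.1⟩
      rcases Nat.lt_or_ge (M + 1) j with h | h
      · exact h
      · exfalso
        have hjeq : j = M + 1 := by omega
        subst hjeq
        exact hjmem.2 rfl
  -- Step EL: push to the idempotent chain L_n.
  have hEL : ∀ U : Set S, IsOpen U → ι (el ⟨(n, n, m), ⟨h1', h1'⟩⟩) ∈ U →
      ∃ j, m < j ∧ ∃ hj : n ≤ j, ι (el ⟨(n, n, j), ⟨hj, hj⟩⟩) ∈ U := by
    intro U hU hmem
    have hρc : Continuous (fun y : S => mulS y (ι (el ⟨(k, n, m), ⟨h2', h1'⟩⟩))) :=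
      contR hcont _
    have hρa : mulS (ι (el ⟨(n, k, m), ⟨h1', h2'⟩⟩)) (ι (el ⟨(k, n, m), ⟨h2', h1'⟩⟩))
        = ι (el ⟨(n, n, m), ⟨h1', h1'⟩⟩) := by
      rw [← hhom, el_mul_pos n k m n m, el_third n n (max m m) m]
    have hpre : IsOpen ((fun y : S => mulS y (ι (el ⟨(k, n, m), ⟨h2', h1'⟩⟩))) ⁻¹' U) :=
      hρc.isOpen_preimage _ hU
    have hamem : ι (el ⟨(n, k, m), ⟨h1', h2'⟩⟩) ∈
        (fun y : S => mulS y (ι (el ⟨(k, n, m), ⟨h2', h1'⟩⟩))) ⁻¹' U := by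
      simp only [Set.mem_preimage, hρa]
      exact hmem
    obtain ⟨j, hjM, hj, hjmem⟩ := hCL m (le_refl m) _ hpre hamem
    simp only [Set.mem_preimage] at hjmem
    rw [← hhom] at hjmem
    have hstep : el ⟨(n, k, j), hj⟩ * el ⟨(k, n, m), ⟨h2', h1'⟩⟩ =
        el ⟨(n, n, j), ⟨hj.1, hj.1⟩⟩ := by
      have e1 : el ⟨(n, k, j), ⟨hj.1, hj.2⟩⟩ * el ⟨(k, n, m), ⟨h2', h1'⟩⟩ =
          el ⟨(n, n, max j m),
            ⟨le_trans hj.1 (le_max_left j m), le_trans h1' (le_max_right j m)⟩⟩ :=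
        el_mul_pos n k j n m hj.1 hj.2 h2' h1'
      rw [e1]
      exact el_third n n (max j m) j (by omega) (by omega) hj.1 hj.1 (by omega)
    rw [hstep] at hjmem
    exact ⟨j, hjM, hj.1, hjmem⟩
  -- Finale: μ/ν contradiction.
  have hnm1 : n ≤ m + 1 := by omega
  have hne2 : ι (el ⟨(n, n, m), ⟨h1', h1'⟩⟩) ≠ ι (el ⟨(n, n, m + 1), ⟨hnm1, hnm1⟩⟩) := by
    intro hEq
    have := congrArg (fun t : GTElem => t.1.2.2) (el_inj (hinj hEq))
    simp only [] at this
    omega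
  obtain ⟨W0, W1, hW0, hW1, hmemW0, hmemW1, hdisj⟩ := t2_separation hne2
  have hμ : mulS (ι (el ⟨(n, n, m), ⟨h1', h1'⟩⟩)) (ι (el ⟨(n, n, m), ⟨h1', h1'⟩⟩))
      = ι (el ⟨(n, n, m), ⟨h1', h1'⟩⟩) := by
    rw [← hhom, el_mul_pos n n m n m, el_third n n (max m m) m]
  obtain ⟨U0, V0, hU0, hV0, hmU0, hmV0, hprod0⟩ :=
    open_pair (F := fun p : S × S => mulS p.1 p.2) hcont hW0
      (by show mulS _ _ ∈ W0; rw [hμ]; exact hmemW0)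
  have hνc : Continuous (fun p : S × S =>
      mulS (mulS p.1 (ι (el ⟨(n, m + 1, m + 1), ⟨hnm1, le_refl _⟩⟩)))
        (mulS (ι (el ⟨(m + 1, n, m + 1), ⟨le_refl _, hnm1⟩⟩)) p.2)) :=
    hcont.comp (((contR hcont _).comp continuous_fst).prodMk
      ((contL hcont _).comp continuous_snd))
  have hν : mulS (mulS (ι (el ⟨(n, n, m), ⟨h1', h1'⟩⟩))
        (ι (el ⟨(n, m + 1, m + 1), ⟨hnm1, le_refl _⟩⟩)))
      (mulS (ι (el ⟨(m + 1, n, m + 1), ⟨le_refl _, hnm1⟩⟩)) (ι (el ⟨(n, n, m), ⟨h1', h1'⟩⟩)))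
      = ι (el ⟨(n, n, m + 1), ⟨hnm1, hnm1⟩⟩) := by
    rw [← hhom, ← hhom, ← hhom]
    rw [el_mul_pos n n m (m + 1) (m + 1), el_mul_pos (m + 1) n (m + 1) n m]
    rw [el_mul_pos n (m + 1) (max m (m + 1)) n (max (m + 1) m)]
    exact congrArg ι (el_third n n (max (max m (m + 1)) (max (m + 1) m)) (m + 1))
  obtain ⟨U1, V1, hU1, hV1, hmU1, hmV1, hprod1⟩ :=
    open_pair (F := fun p : S × S =>
      mulS (mulS p.1 (ι (el ⟨(n, m + 1, m + 1), ⟨hnm1, le_refl _⟩⟩)))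
        (mulS (ι (el ⟨(m + 1, n, m + 1), ⟨le_refl _, hnm1⟩⟩)) p.2)) hνc hW1
      (by show mulS (mulS _ _) _ ∈ W1; rw [hν]; exact hmemW1)
  obtain ⟨j, hjm, hj, hjmem⟩ := hEL (U0 ∩ U1) (hU0.inter hU1) ⟨hmU0, hmU1⟩
  obtain ⟨j', hj'm, hj', hj'mem⟩ := hEL (V0 ∩ V1) (hV0.inter hV1) ⟨hmV0, hmV1⟩
  have hin0 : mulS (ι (el ⟨(n, n, j), ⟨hj, hj⟩⟩)) (ι (el ⟨(n, n, j'), ⟨hj', hj'⟩⟩)) ∈ W0 :=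
    hprod0 _ hjmem.1 _ hj'mem.1
  have hin1 : mulS (mulS (ι (el ⟨(n, n, j), ⟨hj, hj⟩⟩))
        (ι (el ⟨(n, m + 1, m + 1), ⟨hnm1, le_refl _⟩⟩)))
      (mulS (ι (el ⟨(m + 1, n, m + 1), ⟨le_refl _, hnm1⟩⟩)) (ι (el ⟨(n, n, j'), ⟨hj', hj'⟩⟩)))
      ∈ W1 := hprod1 _ hjmem.2 _ hj'mem.2
  rw [← hhom, el_mul_pos n n j n j'] at hin0
  rw [← hhom, ← hhom, ← hhom] at hin1
  rw [el_mul_pos n n j (m + 1) (m + 1), el_mul_pos (m + 1) n (m + 1) n j'] at hin1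
  rw [el_mul_pos n (m + 1) (max j (m + 1)) n (max (m + 1) j')] at hin1
  have hcol : el ⟨(n, n, max (max j (m + 1)) (max (m + 1) j')),
      ⟨(show n ≤ max (max j (m + 1)) (max (m + 1) j') by omega),
       (show n ≤ max (max j (m + 1)) (max (m + 1) j') by omega)⟩⟩ = el ⟨(n, n, max j j'),
      ⟨le_trans hj (le_max_left _ _), le_trans hj (le_max_left _ _)⟩⟩ := by
    refine el_congr (triple_eq rfl rfl ?_)
    omega
  rw [hcol] at hin1
  have hin0' : ι (el ⟨(n, n, max j j'),
      ⟨le_trans hj (le_max_left _ _), le_trans hj (le_max_left _ _)⟩⟩) ∈ W0 := hin0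
  exact Set.disjoint_left.1 hdisj hin0' hin1

end Part1

end GISPaper
namespace GISPaper

section Part2Machinery

variable {S : Type*} [TopologicalSpace S] [T2Space S] {mulS : S → S → S} {ι : GT → S}

/-- Every infinite set of nonzero elements has an accumulation point in `S`
(consequence of CLP-compactness). -/
theorem exists_acc (hcont : Continuous fun p : S × S => mulS p.1 p.2)
    (hinj : Function.Injective ι)
    (hhom : ∀ x y : GT, ι (x * y) = mulS (ι x) (ι y)) (hdense : DenseRange ι)
    (hclp : CLPCompact S)
    (B : Set GT) (hB : B.Infinite) (h0B : (0 : GT) ∉ B) :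
    ∃ z : S, ∀ U : Set S, IsOpen U → z ∈ U → {b ∈ B | ι b ∈ U}.Infinite := by
  by_contra hcon
  push_neg at hcon
  have hA : ∀ z : S, ∃ U : Set S, IsOpen U ∧ z ∈ U ∧ {b ∈ B | ι b ∈ U}.Finite := by
    intro z
    obtain ⟨U, hU, hz, hfin⟩ := hcon z
    exact ⟨U, hU, hz, hfin⟩
  have hBopen : IsOpen (ι '' B) := by
    have hEq : ι '' B = ⋃ b ∈ B, {ι b} := by
      ext x; simp [eq_comm]
    rw [hEq]
    refine isOpen_biUnion fun b hb => ?_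
    rcases gt_cases b with rfl | ⟨p, rfl⟩
    · exact absurd hb h0B
    · exact isolated hcont hinj hhom hdense p
  have hBclosed : IsClosed (ι '' B) := by
    rw [← isOpen_compl_iff, isOpen_iff_forall_mem_open]
    intro z hz
    obtain ⟨U, hU, hzU, hfin⟩ := hA z
    refine ⟨U \ ι '' {b ∈ B | ι b ∈ U}, ?_, hU.sdiff (hfin.image ι).isClosed, hzU, ?_⟩
    · intro w hw hwB
      obtain ⟨b, hbB, rfl⟩ := hwB
      exact hw.2 ⟨b, ⟨hbB, hw.1⟩, rfl⟩
    · intro hc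
      obtain ⟨b, hb, he⟩ := hc
      exact hz ⟨b, hb.1, he⟩
  classical
  obtain ⟨ℱ, hsub, hfin, hcov⟩ := hclp
    (insert ((ι '' B)ᶜ) ((fun b : GT => ({ι b} : Set S)) '' B))
    (by
      intro V hV
      rcases Set.mem_insert_iff.1 hV with rfl | ⟨b, hbB, rfl⟩
      · exact ⟨isClosed_compl_iff.2 hBopen, isOpen_compl_iff.2 hBclosed⟩
      · refine ⟨isClosed_singleton, ?_⟩
        rcases gt_cases b with rfl | ⟨p, rfl⟩
        · exact absurd hbB h0B
        · exact isolated hcont hinj hhom hdense p)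
    (by
      apply Set.eq_univ_of_forall
      intro x
      by_cases hx : x ∈ ι '' B
      · obtain ⟨b, hb, rfl⟩ := hx
        exact ⟨{ι b}, Set.mem_insert_of_mem _ ⟨b, hb, rfl⟩, rfl⟩
      · exact ⟨(ι '' B)ᶜ, Set.mem_insert _ _, hx⟩)
  have hHfin : {b ∈ B | ({ι b} : Set S) ∈ ℱ}.Finite := by
    refine Set.Finite.of_finite_image (f := fun b : GT => ({ι b} : Set S)) (hfin.subset ?_) ?_
    · rintro V ⟨b, hb, rfl⟩
      exact hb.2
    · intro b hb b' hb' he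
      exact hinj (Set.singleton_eq_singleton_iff.1 he)
  obtain ⟨b, hbB, hbH⟩ : ∃ b, b ∈ B ∧ ({ι b} : Set S) ∉ ℱ := by
    obtain ⟨b, hb⟩ := (hB.diff hHfin).nonempty
    exact ⟨b, hb.1, fun hc => hb.2 ⟨hb.1, hc⟩⟩
  have hmem : ι b ∈ ⋃₀ ℱ := hcov ▸ Set.mem_univ _
  obtain ⟨V, hVF, hbV⟩ := hmem
  rcases Set.mem_insert_iff.1 (hsub hVF) with rfl | ⟨b', hb', rfl⟩
  · exact hbV ⟨b, hbB, rfl⟩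
  · have hEq : b' = b := hinj hbV.symm
    subst hEq
    exact hbH hVF

/-- The key (Δ) lemma: every neighbourhood of `ι 0` meets every infinite family of
diagonal idempotents. -/
theorem hit_dia (hcont : Continuous fun p : S × S => mulS p.1 p.2)
    (hinj : Function.Injective ι)
    (hhom : ∀ x y : GT, ι (x * y) = mulS (ι x) (ι y)) (hdense : DenseRange ι)
    (hclp : CLPCompact S)
    (I : Set ℕ) (hI : I.Infinite) (U : Set S) (hU : IsOpen U) (h0 : ι 0 ∈ U) :
    ∃ q ∈ I, ι (dia q) ∈ U := by
  by_contra hcon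
  push_neg at hcon
  have hBinf : ((fun q : ℕ => dia q) '' I).Infinite :=
    hI.image (fun q _ q' _ h => dia_inj h)
  have h0B : (0 : GT) ∉ (fun q : ℕ => dia q) '' I := by
    rintro ⟨q, -, hq⟩
    exact el_ne_zero _ hq
  obtain ⟨z, hz⟩ := exists_acc hcont hinj hhom hdense hclp _ hBinf h0B
  have hpull : ∀ U' : Set S, IsOpen U' → z ∈ U' → {q ∈ I | ι (dia q) ∈ U'}.Infinite := by
    intro U' hU' hzU'
    have hinf := hz U' hU' hzU'
    have hsub : {b ∈ (fun q : ℕ => dia q) '' I | ι b ∈ U'} ⊆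
        (fun q : ℕ => dia q) '' {q ∈ I | ι (dia q) ∈ U'} := by
      rintro b ⟨⟨q, hqI, rfl⟩, hbU⟩
      exact ⟨q, ⟨hqI, hbU⟩, rfl⟩
    by_contra hfin
    exact (hinf.mono hsub) ((Set.not_infinite.1 hfin).image _)
  have hzz : mulS z z = ι 0 := by
    by_contra hne
    have hWo : IsOpen ({ι 0}ᶜ : Set S) := isOpen_compl_singleton
    have hmW : mulS z z ∈ ({ι 0}ᶜ : Set S) := hne
    obtain ⟨U₁, V₁, hU₁, hV₁, hzU₁, hzV₁, hprod⟩ :=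
      open_pair (F := fun p : S × S => mulS p.1 p.2) hcont hWo hmW
    obtain ⟨q₁, hq₁⟩ := (hpull U₁ hU₁ hzU₁).nonempty
    obtain ⟨q₂, hq₂⟩ := ((hpull V₁ hV₁ hzV₁).diff (Set.finite_singleton q₁)).nonempty
    have hne' : q₁ ≠ q₂ := fun h => hq₂.2 (by rw [← h]; exact rfl)
    have hval := hprod _ hq₁.2 _ hq₂.1.2
    rw [← hhom, dia_mul_ne hne'] at hval
    exact hval rfl
  obtain ⟨U₁, V₁, hU₁, hV₁, hzU₁, hzV₁, hprod⟩ :=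
    open_pair (F := fun p : S × S => mulS p.1 p.2) hcont hU
      (by show mulS z z ∈ U; rw [hzz]; exact h0)
  obtain ⟨q, hq⟩ := (hpull (U₁ ∩ V₁) (hU₁.inter hV₁) ⟨hzU₁, hzV₁⟩).nonempty
  have hval := hprod _ hq.2.1 _ hq.2.2
  rw [← hhom, dia_mul_self] at hval
  exact hcon q hq.1 hval

/-- Families indexed by their own second coordinate accumulate at `ι 0`. -/
theorem hit_right (hcont : Continuous fun p : S × S => mulS p.1 p.2)
    (hinj : Function.Injective ι)
    (hhom : ∀ x y : GT, ι (x * y) = mulS (ι x) (ι y)) (hdense : DenseRange ι)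
    (hclp : CLPCompact S)
    (x : ℕ → GTElem) (hx2 : ∀ q, (x q).1.2.1 = q)
    (I : Set ℕ) (hI : I.Infinite) (U : Set S) (hU : IsOpen U) (h0 : ι 0 ∈ U) :
    ∃ q ∈ I, ι (el (x q)) ∈ U := by
  by_contra hcon
  push_neg at hcon
  have hxinj : ∀ q q', x q = x q' → q = q' := by
    intro q q' h
    rw [← hx2 q, ← hx2 q', h]
  have hBinf : ((fun q : ℕ => el (x q)) '' I).Infinite :=
    hI.image (fun q _ q' _ h => hxinj _ _ (el_inj h))
  have h0B : (0 : GT) ∉ (fun q : ℕ => el (x q)) '' I := by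
    rintro ⟨q, -, hq⟩
    exact el_ne_zero _ hq
  obtain ⟨z, hz⟩ := exists_acc hcont hinj hhom hdense hclp _ hBinf h0B
  have hpull : ∀ U' : Set S, IsOpen U' → z ∈ U' → {q ∈ I | ι (el (x q)) ∈ U'}.Infinite := by
    intro U' hU' hzU'
    have hinf := hz U' hU' hzU'
    have hsub : {b ∈ (fun q : ℕ => el (x q)) '' I | ι b ∈ U'} ⊆
        (fun q : ℕ => el (x q)) '' {q ∈ I | ι (el (x q)) ∈ U'} := by
      rintro b ⟨⟨q, hqI, rfl⟩, hbU⟩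
      exact ⟨q, ⟨hqI, hbU⟩, rfl⟩
    by_contra hfin
    exact (hinf.mono hsub) ((Set.not_infinite.1 hfin).image _)
  obtain ⟨U₁, V₀, hU₁, hV₀, hzU₁, h0V₀, hprod⟩ :=
    open_pair (F := fun p : S × S => mulS p.1 p.2) hcont hU
      (by show mulS z (ι 0) ∈ U; rw [zeroR hcont hhom hdense]; exact h0)
  obtain ⟨q, hqmem, hqdia⟩ := hit_dia hcont hinj hhom hdense hclp
    {q ∈ I | ι (el (x q)) ∈ U₁} (hpull U₁ hU₁ hzU₁) V₀ hV₀ h0V₀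
  have hval := hprod _ hqmem.2 _ hqdia
  rw [← hhom] at hval
  have hxd : el (x q) * dia q = el (x q) := by
    have := el_mul_dia (x q)
    rwa [hx2 q] at this
  rw [hxd] at hval
  exact hcon q hqmem.1 hval

/-- Families indexed by their own first coordinate accumulate at `ι 0`. -/
theorem hit_left (hcont : Continuous fun p : S × S => mulS p.1 p.2)
    (hinj : Function.Injective ι)
    (hhom : ∀ x y : GT, ι (x * y) = mulS (ι x) (ι y)) (hdense : DenseRange ι)
    (hclp : CLPCompact S)
    (x : ℕ → GTElem) (hx1 : ∀ q, (x q).1.1 = q)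
    (I : Set ℕ) (hI : I.Infinite) (U : Set S) (hU : IsOpen U) (h0 : ι 0 ∈ U) :
    ∃ q ∈ I, ι (el (x q)) ∈ U := by
  by_contra hcon
  push_neg at hcon
  have hxinj : ∀ q q', x q = x q' → q = q' := by
    intro q q' h
    rw [← hx1 q, ← hx1 q', h]
  have hBinf : ((fun q : ℕ => el (x q)) '' I).Infinite :=
    hI.image (fun q _ q' _ h => hxinj _ _ (el_inj h))
  have h0B : (0 : GT) ∉ (fun q : ℕ => el (x q)) '' I := by
    rintro ⟨q, -, hq⟩
    exact el_ne_zero _ hq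
  obtain ⟨z, hz⟩ := exists_acc hcont hinj hhom hdense hclp _ hBinf h0B
  have hpull : ∀ U' : Set S, IsOpen U' → z ∈ U' → {q ∈ I | ι (el (x q)) ∈ U'}.Infinite := by
    intro U' hU' hzU'
    have hinf := hz U' hU' hzU'
    have hsub : {b ∈ (fun q : ℕ => el (x q)) '' I | ι b ∈ U'} ⊆
        (fun q : ℕ => el (x q)) '' {q ∈ I | ι (el (x q)) ∈ U'} := by
      rintro b ⟨⟨q, hqI, rfl⟩, hbU⟩
      exact ⟨q, ⟨hqI, hbU⟩, rfl⟩
    by_contra hfin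
    exact (hinf.mono hsub) ((Set.not_infinite.1 hfin).image _)
  obtain ⟨V₀, U₁, hV₀, hU₁, h0V₀, hzU₁, hprod⟩ :=
    open_pair (F := fun p : S × S => mulS p.1 p.2) hcont hU
      (by show mulS (ι 0) z ∈ U; rw [zeroL hcont hhom hdense]; exact h0)
  obtain ⟨q, hqmem, hqdia⟩ := hit_dia hcont hinj hhom hdense hclp
    {q ∈ I | ι (el (x q)) ∈ U₁} (hpull U₁ hU₁ hzU₁) V₀ hV₀ h0V₀
  have hval := hprod _ hqdia _ hqmem.2
  rw [← hhom] at hval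
  have hxd : dia q * el (x q) = el (x q) := by
    have := dia_mul_el (x q)
    rwa [hx1 q] at this
  rw [hxd] at hval
  exact hcon q hqmem.1 hval

end Part2Machinery

end GISPaper
namespace GISPaper

section Part3Machinery

variable {S : Type*} [TopologicalSpace S] [T2Space S] {mulS : S → S → S} {ι : GT → S}

/-- Every open neighbourhood of `ι 0` contains all but finitely many elements of the
copy of `G(T)`. -/
theorem cofinite_nbhd (hcont : Continuous fun p : S × S => mulS p.1 p.2)
    (hinj : Function.Injective ι)
    (hhom : ∀ x y : GT, ι (x * y) = mulS (ι x) (ι y)) (hdense : DenseRange ι)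
    (hclp : CLPCompact S)
    (V : Set S) (hV : IsOpen V) (h0V : ι 0 ∈ V) :
    {g : GTElem | ι (el g) ∉ V}.Finite := by
  classical
  by_contra hBfin
  have hBinf : {g : GTElem | ι (el g) ∉ V}.Infinite := hBfin
  by_cases hc2 : ((fun g : GTElem => g.1.2.1) '' {g : GTElem | ι (el g) ∉ V}).Infinite
  · -- infinitely many distinct second coordinates
    have hx2ex : ∀ q ∈ (fun g : GTElem => g.1.2.1) '' {g : GTElem | ι (el g) ∉ V},
        ∃ g, (ι (el g) ∉ V) ∧ g.1.2.1 = q := by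
      rintro q ⟨g, hg, rfl⟩
      exact ⟨g, hg, rfl⟩
    set x : ℕ → GTElem := fun q =>
      if h : ∃ g, (ι (el g) ∉ V) ∧ g.1.2.1 = q then h.choose
      else ⟨(q, q, q), ⟨le_refl q, le_refl q⟩⟩ with hxdef
    have hx2 : ∀ q, (x q).1.2.1 = q := by
      intro q
      by_cases h : ∃ g, (ι (el g) ∉ V) ∧ g.1.2.1 = q
      · rw [show x q = h.choose from dif_pos h]
        exact h.choose_spec.2
      · rw [show x q = ⟨(q, q, q), ⟨le_refl q, le_refl q⟩⟩ from dif_neg h]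
    obtain ⟨q, hqI, hqV⟩ := hit_right hcont hinj hhom hdense hclp x hx2 _ hc2 V hV h0V
    have hP : ∃ g, (ι (el g) ∉ V) ∧ g.1.2.1 = q := hx2ex q hqI
    have hxB : ι (el (x q)) ∉ V := by
      rw [show x q = hP.choose from dif_pos hP]
      exact hP.choose_spec.1
    exact hxB hqV
  by_cases hc1 : ((fun g : GTElem => g.1.1) '' {g : GTElem | ι (el g) ∉ V}).Infinite
  · -- infinitely many distinct first coordinates
    have hx1ex : ∀ q ∈ (fun g : GTElem => g.1.1) '' {g : GTElem | ι (el g) ∉ V},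
        ∃ g, (ι (el g) ∉ V) ∧ g.1.1 = q := by
      rintro q ⟨g, hg, rfl⟩
      exact ⟨g, hg, rfl⟩
    set x : ℕ → GTElem := fun q =>
      if h : ∃ g, (ι (el g) ∉ V) ∧ g.1.1 = q then h.choose
      else ⟨(q, q, q), ⟨le_refl q, le_refl q⟩⟩ with hxdef
    have hx1 : ∀ q, (x q).1.1 = q := by
      intro q
      by_cases h : ∃ g, (ι (el g) ∉ V) ∧ g.1.1 = q
      · rw [show x q = h.choose from dif_pos h]
        exact h.choose_spec.2
      · rw [show x q = ⟨(q, q, q), ⟨le_refl q, le_refl q⟩⟩ from dif_neg h]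
    obtain ⟨q, hqI, hqV⟩ := hit_left hcont hinj hhom hdense hclp x hx1 _ hc1 V hV h0V
    have hP : ∃ g, (ι (el g) ∉ V) ∧ g.1.1 = q := hx1ex q hqI
    have hxB : ι (el (x q)) ∉ V := by
      rw [show x q = hP.choose from dif_pos hP]
      exact hP.choose_spec.1
    exact hxB hqV
  -- both coordinate sets finite: some chain contains infinitely many elements of B
  have hc2' := Set.not_infinite.1 hc2
  have hc1' := Set.not_infinite.1 hc1
  have hPfin : ((fun g : GTElem => (g.1.1, g.1.2.1)) '' {g : GTElem | ι (el g) ∉ V}).Finite := by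
    refine (hc1'.prod hc2').subset ?_
    rintro p ⟨g, hg, rfl⟩
    exact ⟨⟨g, hg, rfl⟩, ⟨g, hg, rfl⟩⟩
  obtain ⟨nk, hnkmem, hfib⟩ : ∃ p ∈ (fun g : GTElem => (g.1.1, g.1.2.1)) ''
      {g : GTElem | ι (el g) ∉ V},
      {g : GTElem | (ι (el g) ∉ V) ∧ (g.1.1, g.1.2.1) = p}.Infinite := by
    by_contra hall
    push_neg at hall
    have hcover : {g : GTElem | ι (el g) ∉ V} ⊆
        ⋃ p ∈ (fun g : GTElem => (g.1.1, g.1.2.1)) '' {g : GTElem | ι (el g) ∉ V},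
          {g : GTElem | (ι (el g) ∉ V) ∧ (g.1.1, g.1.2.1) = p} := by
      intro g hg
      exact Set.mem_biUnion ⟨g, hg, rfl⟩ ⟨hg, rfl⟩
    exact hBinf ((Set.Finite.biUnion hPfin
      (fun p hp => hall p hp)).subset hcover)
  obtain ⟨n, k⟩ := nk
  have hJinf : ((fun g : GTElem => g.1.2.2) ''
      {g : GTElem | (ι (el g) ∉ V) ∧ (g.1.1, g.1.2.1) = (n, k)}).Infinite := by
    refine hfib.image ?_
    rintro g ⟨-, hg⟩ g' ⟨-, hg'⟩ h3
    apply gtElem_ext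
    have e1 : g.1.1 = n := (Prod.ext_iff.1 hg).1
    have e2 : g.1.2.1 = k := (Prod.ext_iff.1 hg).2
    have e1' : g'.1.1 = n := (Prod.ext_iff.1 hg').1
    have e2' : g'.1.2.1 = k := (Prod.ext_iff.1 hg').2
    exact Prod.ext_iff.2 ⟨by rw [e1, e1'], Prod.ext_iff.2 ⟨by rw [e2, e2'], h3⟩⟩
  have hJgt : ∀ r : ℕ, ∃ j ∈ (fun g : GTElem => g.1.2.2) ''
      {g : GTElem | (ι (el g) ∉ V) ∧ (g.1.1, g.1.2.1) = (n, k)}, r < j :=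
    fun r => hJinf.exists_gt r
  choose jf hjJ hjgt using hJgt
  -- joint continuity at (ι 0, ι 0)
  have h00 : mulS (ι 0) (ι 0) = ι 0 := by
    rw [← hhom]
    rfl
  obtain ⟨U₁, U₂, hU₁, hU₂, h0U₁, h0U₂, hprod⟩ :=
    open_pair (F := fun p : S × S => mulS p.1 p.2) hcont hV
      (by show mulS (ι 0) (ι 0) ∈ V; rw [h00]; exact h0V)
  -- family 1: bottoms of the row of n
  set x1 : ℕ → GTElem := fun q =>
    ⟨(n, q, max n q), ⟨le_max_left n q, le_max_right n q⟩⟩ with hx1def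
  have hx12 : ∀ q, (x1 q).1.2.1 = q := fun q => rfl
  have hQ1inf : {q : ℕ | ι (el (x1 q)) ∈ U₁ ∩ U₂}.Infinite := by
    by_contra hfin
    obtain ⟨q, hq1, hq2⟩ := hit_right hcont hinj hhom hdense hclp x1 hx12
      ({q : ℕ | ι (el (x1 q)) ∈ U₁ ∩ U₂}ᶜ) ((Set.not_infinite.1 hfin).infinite_compl)
      (U₁ ∩ U₂) (hU₁.inter hU₂) ⟨h0U₁, h0U₂⟩
    exact hq1 hq2
  -- family 2: deep elements of the chains C_{q,k}
  set x2 : ℕ → GTElem := fun q =>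
    ⟨(q, k, jf (max q (max n k))),
      ⟨(show q ≤ jf (max q (max n k)) from
          le_of_lt (lt_of_le_of_lt (le_max_left q (max n k)) (hjgt (max q (max n k))))),
        (show k ≤ jf (max q (max n k)) from
          le_of_lt (lt_of_le_of_lt (le_trans (le_max_right n k) (le_max_right q (max n k)))
            (hjgt (max q (max n k)))))⟩⟩ with hx2def
  have hx21 : ∀ q, (x2 q).1.1 = q := fun q => rfl
  obtain ⟨q, hqQ1, hq2U⟩ := hit_left hcont hinj hhom hdense hclp x2 hx21
    {q : ℕ | ι (el (x1 q)) ∈ U₁ ∩ U₂} hQ1inf (U₁ ∩ U₂) (hU₁.inter hU₂) ⟨h0U₁, h0U₂⟩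
  have hgtq := hjgt (max q (max n k))
  -- the product lands on a deep element of the chain C_{n,k} that avoids V
  have hval : mulS (ι (el (x1 q))) (ι (el (x2 q))) ∈ V :=
    hprod _ hqQ1.1 _ hq2U.2
  have hval' : mulS
      (ι (el ⟨(n, q, max n q), ⟨le_max_left n q, le_max_right n q⟩⟩))
      (ι (el ⟨(q, k, jf (max q (max n k))),
        ⟨(show q ≤ jf (max q (max n k)) from
            le_of_lt (lt_of_le_of_lt (le_max_left q (max n k)) (hjgt (max q (max n k))))),
          (show k ≤ jf (max q (max n k)) from
            le_of_lt (lt_of_le_of_lt (le_trans (le_max_right n k) (le_max_right q (max n k)))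
              (hjgt (max q (max n k)))))⟩⟩)) ∈ V := hval
  rw [← hhom] at hval'
  rw [el_mul_pos n q (max n q) k (jf (max q (max n k)))
    (le_max_left n q) (le_max_right n q)
    (le_of_lt (lt_of_le_of_lt (le_max_left q (max n k)) (hjgt (max q (max n k)))))
    (le_of_lt (lt_of_le_of_lt (le_trans (le_max_right n k) (le_max_right q (max n k)))
      (hjgt (max q (max n k)))))] at hval'
  rw [el_third n k (max (max n q) (jf (max q (max n k)))) (jf (max q (max n k)))
    (by omega) (by omega) (by omega) (by omega) (by omega)] at hval'
  -- but that element is in B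
  obtain ⟨g, hgmem, hg3⟩ := hjJ (max q (max n k))
  have hgel : el g = el ⟨(n, k, jf (max q (max n k))),
      ⟨(show n ≤ jf (max q (max n k)) by omega), (show k ≤ jf (max q (max n k)) by omega)⟩⟩ := by
    refine el_congr ?_
    have e1 : g.1.1 = n := (Prod.ext_iff.1 hgmem.2).1
    have e2 : g.1.2.1 = k := (Prod.ext_iff.1 hgmem.2).2
    exact Prod.ext_iff.2 ⟨by rw [e1], Prod.ext_iff.2 ⟨by rw [e2], hg3⟩⟩
  have hnotV : ι (el ⟨(n, k, jf (max q (max n k))),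
      ⟨(show n ≤ jf (max q (max n k)) by omega), (show k ≤ jf (max q (max n k)) by omega)⟩⟩) ∉ V := by
    rw [← hgel]
    exact hgmem.1
  exact hnotV hval'

/-- Surjectivity of the dense embedding. -/
theorem surj_of_clp (hcont : Continuous fun p : S × S => mulS p.1 p.2)
    (hinj : Function.Injective ι)
    (hhom : ∀ x y : GT, ι (x * y) = mulS (ι x) (ι y)) (hdense : DenseRange ι)
    (hclp : CLPCompact S) : Function.Surjective ι := by
  intro s
  by_contra hcon
  push_neg at hcon
  have hs0 : s ≠ ι 0 := fun h => hcon 0 h.symm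
  obtain ⟨Vs, V0, hVs, hV0, hsVs, h0V0, hdisj⟩ := t2_separation hs0
  have hfin := cofinite_nbhd hcont hinj hhom hdense hclp V0 hV0 h0V0
  have hKfin : (insert (ι 0) (ι '' (el '' {g : GTElem | ι (el g) ∉ V0}))).Finite :=
    ((hfin.image el).image ι).insert _
  have hW : IsOpen (Vs \ insert (ι 0) (ι '' (el '' {g : GTElem | ι (el g) ∉ V0}))) :=
    hVs.sdiff hKfin.isClosed
  have hsW : s ∈ Vs \ insert (ι 0) (ι '' (el '' {g : GTElem | ι (el g) ∉ V0})) := by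
    refine ⟨hsVs, ?_⟩
    intro hsK
    rcases Set.mem_insert_iff.1 hsK with h | ⟨g', ⟨g, hg, rfl⟩, hEq⟩
    · exact hs0 h
    · exact hcon _ hEq
  obtain ⟨g, hg⟩ := hdense.exists_mem_open hW ⟨s, hsW⟩
  rcases gt_cases g with rfl | ⟨p, rfl⟩
  · exact hg.2 (Set.mem_insert _ _)
  · by_cases hp : ι (el p) ∈ V0
    · exact Set.disjoint_left.1 hdisj hg.1 hp
    · exact hg.2 (Set.mem_insert_of_mem _ ⟨el p, ⟨p, hp, rfl⟩, rfl⟩)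

/-- The induced topology is `tauC`. -/
theorem induced_eq_tauC (hcont : Continuous fun p : S × S => mulS p.1 p.2)
    (hinj : Function.Injective ι)
    (hhom : ∀ x y : GT, ι (x * y) = mulS (ι x) (ι y)) (hdense : DenseRange ι)
    (hclp : CLPCompact S) :
    TopologicalSpace.induced ι (inferInstance : TopologicalSpace S) = tauC GT := by
  apply TopologicalSpace.ext
  funext U
  apply propext
  constructor
  · rintro ⟨V, hV, rfl⟩
    intro h0
    have hfin := cofinite_nbhd hcont hinj hhom hdense hclp V hV h0
    refine (hfin.image el).subset ?_
    intro x hx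
    rcases gt_cases x with rfl | ⟨p, rfl⟩
    · exact absurd h0 hx
    · exact ⟨p, hx, rfl⟩
  · intro hU
    refine ⟨(ι '' Uᶜ)ᶜ, ?_, ?_⟩
    · by_cases h0 : (0 : GT) ∈ U
      · exact (((hU h0).image ι).isClosed).isOpen_compl
      · rw [isOpen_iff_forall_mem_open]
        intro y hy
        obtain ⟨g, rfl⟩ := surj_of_clp hcont hinj hhom hdense hclp y
        have hgU : g ∈ U := by
          by_contra hgc
          exact hy ⟨g, hgc, rfl⟩
        rcases gt_cases g with rfl | ⟨p, rfl⟩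
        · exact absurd hgU h0
        · refine ⟨{ι (el p)}, ?_, isolated hcont hinj hhom hdense p, rfl⟩
          intro w hw
          rw [Set.mem_singleton_iff] at hw
          subst hw
          exact hy
    · rw [Set.preimage_compl, Set.preimage_image_eq _ hinj, compl_compl]

/-- The ambient space is compact. -/
theorem compact_of_clp (hcont : Continuous fun p : S × S => mulS p.1 p.2)
    (hinj : Function.Injective ι)
    (hhom : ∀ x y : GT, ι (x * y) = mulS (ι x) (ι y)) (hdense : DenseRange ι)
    (hclp : CLPCompact S) : CompactSpace S := by
  have hind := induced_eq_tauC hcont hinj hhom hdense hclp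
  have hco : @Continuous GT S (tauC GT) _ ι := by
    rw [@continuous_iff_le_induced GT S ι (tauC GT) _, hind]
  have hcomp : @IsCompact GT (tauC GT) Set.univ :=
    @CompactSpace.isCompact_univ GT (tauC GT) tauC_compact
  have himg : IsCompact (ι '' Set.univ) :=
    @IsCompact.image GT S (tauC GT) _ Set.univ ι hcomp hco
  rw [Set.image_univ, Set.range_eq_univ.2 (surj_of_clp hcont hinj hhom hdense hclp)] at himg
  exact ⟨himg⟩

end Part3Machinery

end GISPaper

open GISPaper in
/-- If `G(T)` is a dense subsemigroup of a Hausdorff CLP-compact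
topological semigroup `S`, then `S = G(T)` with the topology `τ_c` (the dense
embedding is onto and induces `τ_c`), and `S` is compact. Conversely, `(G(T), τ_c)`
is a compact Hausdorff topological semigroup. -/
theorem statement15 :
    (∀ (S : Type u) (tS : TopologicalSpace S) (mulS : S → S → S),
      (∀ a b c : S, mulS (mulS a b) c = mulS a (mulS b c)) →
      @T2Space S tS →
      @Continuous _ _ (@instTopologicalSpaceProd S S tS tS) tS
        (fun p : S × S => mulS p.1 p.2) →
      @CLPCompact S tS →
      ∀ ι : GT → S, Function.Injective ι →
        (∀ x y : GT, ι (x * y) = mulS (ι x) (ι y)) →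
        @DenseRange S tS _ ι →
        Function.Surjective ι ∧
        TopologicalSpace.induced ι tS = tauC GT ∧
        @CompactSpace S tS) ∧
    (@CompactSpace GT (tauC GT) ∧ @T2Space GT (tauC GT) ∧
      @Continuous _ _ (@instTopologicalSpaceProd GT GT (tauC GT) (tauC GT)) (tauC GT)
        (fun p : GT × GT => p.1 * p.2)) := by
  constructor
  · intro S tS mulS _hassoc h2 hcont hclp ι hinj hhom hdense
    letI : TopologicalSpace S := tS
    haveI : T2Space S := h2
    exact ⟨surj_of_clp hcont hinj hhom hdense hclp,
      induced_eq_tauC hcont hinj hhom hdense hclp,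
      compact_of_clp hcont hinj hhom hdense hclp⟩
  · exact ⟨tauC_compact, tauC_t2, tauC_mul_cont⟩
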